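/- arXiv:1607.02990 — 3 statements merged into one kernel-verified Lean document; each statement's English description precedes it below -/
import Mathlib

section
/- Let d ≥ 2. There exists a constant C > 0 (depending only on d) such that for all t > 0 and all x, y ∈ ℝ^d₊: |∇_x H(x,y,t)| ≤ C H(x,y,t) [ t^{−1/2} (1 + |x−y|/√t) + 1/x_d ]. -/
open MeasureTheory Real Set

/-- One-dimensional Gaussian heat kernel `G_t(ξ) = (4πt)^{−1/2} e^{−ξ²/(4t)}`. -/
noncomputable def G1 (t ξ : ℝ) : ℝ := (4 * π * t) ^ (-(1 : ℝ) / 2) * Real.exp (-ξ ^ 2 / (4 * t))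

/-- `(d−1)`-dimensional Gaussian heat kernel (here `d = n+2`, so `d−1 = n+1`):
`G_t^{(d−1)}(v) = (4πt)^{−(d−1)/2} e^{−|v|²/(4t)}`. -/
noncomputable def Gtan (n : ℕ) (t : ℝ) (v : Fin (n + 1) → ℝ) : ℝ :=
  (4 * π * t) ^ (-((n : ℝ) + 1) / 2) * Real.exp (-(∑ i, (v i) ^ 2) / (4 * t))

/-- Half-space Dirichlet heat kernel in dimension `d = n+2`:
`H(x,y,t) = G_t^{(d−1)}(x'−y') (G_t(x_d−y_d) − G_t(x_d+y_d))`. -/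
noncomputable def H (n : ℕ) (t : ℝ) (x y : Fin (n + 2) → ℝ) : ℝ :=
  Gtan n t (fun i => x i.castSucc - y i.castSucc) *
    (G1 t (x (Fin.last (n + 1)) - y (Fin.last (n + 1))) -
      G1 t (x (Fin.last (n + 1)) + y (Fin.last (n + 1))))

lemma sqrt_sum_sq_le_sum_abs {m : ℕ} (f : Fin m → ℝ) :
    Real.sqrt (∑ i, f i ^ 2) ≤ ∑ i, |f i| := by
  have h1 : ∑ i, f i ^ 2 ≤ (∑ i, |f i|) ^ 2 := by
    calc ∑ i, f i ^ 2 = ∑ i, |f i| ^ 2 := by simp [sq_abs]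
    _ ≤ (∑ i, |f i|) ^ 2 := Finset.sum_sq_le_sq_sum_of_nonneg (by intro i _; positivity)
  calc Real.sqrt (∑ i, f i ^ 2) ≤ Real.sqrt ((∑ i, |f i|)^2) := Real.sqrt_le_sqrt h1
  _ = _ := Real.sqrt_sq (by positivity)

lemma hasDerivAt_G1 (t ξ : ℝ) : HasDerivAt (G1 t) (-ξ / (2*t) * G1 t ξ) ξ := by
  rcases eq_or_ne t 0 with rfl | ht
  · have h0 : -ξ / (2*(0:ℝ)) * G1 0 ξ = 0 := by norm_num
    rw [h0]
    have hG : G1 0 = fun _ : ℝ => (4 * π * 0) ^ (-(1:ℝ)/2) * Real.exp 0 := by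
      funext s; simp [G1]
    rw [hG]
    exact hasDerivAt_const _ _
  · have h1 : HasDerivAt (fun ξ : ℝ => -ξ ^ 2 / (4*t)) (-ξ / (2*t)) ξ := by
      have h : HasDerivAt (fun ξ : ℝ => -ξ ^ 2 / (4*t)) _ ξ := ((hasDerivAt_pow 2 ξ).neg).div_const (4*t)
      convert h using 1
      field_simp
      ring
    have h3 := (h1.exp).const_mul ((4 * π * t) ^ (-(1:ℝ)/2))
    have h4 : HasDerivAt (G1 t)
        ((4 * π * t) ^ (-(1:ℝ)/2) * (Real.exp (-ξ ^ 2 / (4*t)) * (-ξ / (2*t)))) ξ := h3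
    convert h4 using 1
    simp only [G1]; ring

lemma hasDerivAt_G1_sub (t b s : ℝ) :
    HasDerivAt (fun s => G1 t (s - b)) (-(s - b) / (2*t) * G1 t (s - b)) s := by
  have := (hasDerivAt_G1 t (s - b)).comp s ((hasDerivAt_id s).sub_const b)
  simpa [Function.comp_def] using this

lemma hasDerivAt_G1_add (t b s : ℝ) :
    HasDerivAt (fun s => G1 t (s + b)) (-(s + b) / (2*t) * G1 t (s + b)) s := by
  have := (hasDerivAt_G1 t (s + b)).comp s ((hasDerivAt_id s).add_const b)
  simpa [Function.comp_def] using this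

lemma deriv_H_last (n : ℕ) (t : ℝ) (x y : Fin (n+2) → ℝ) :
    deriv (fun s => H n t (Function.update x (Fin.last (n+1)) s) y) (x (Fin.last (n+1))) =
      Gtan n t (fun i => x i.castSucc - y i.castSucc) *
        (-(x (Fin.last (n+1)) - y (Fin.last (n+1))) / (2*t) *
            G1 t (x (Fin.last (n+1)) - y (Fin.last (n+1)))
          - -(x (Fin.last (n+1)) + y (Fin.last (n+1))) / (2*t) *
            G1 t (x (Fin.last (n+1)) + y (Fin.last (n+1)))) := by
  have hfun : (fun s => H n t (Function.update x (Fin.last (n+1)) s) y)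
      = fun s => Gtan n t (fun i => x i.castSucc - y i.castSucc) *
          (G1 t (s - y (Fin.last (n+1))) - G1 t (s + y (Fin.last (n+1)))) := by
    funext s
    simp only [H]
    congr 1
    · congr 1
      funext i
      rw [Function.update_of_ne (Fin.castSucc_lt_last i).ne]
    · rw [Function.update_self]
  rw [hfun]
  exact (((hasDerivAt_G1_sub t (y (Fin.last (n+1))) (x (Fin.last (n+1)))).sub
    (hasDerivAt_G1_add t (y (Fin.last (n+1))) (x (Fin.last (n+1))))).const_mul
    (Gtan n t (fun i => x i.castSucc - y i.castSucc))).deriv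

lemma deriv_H_tangential (n : ℕ) (t : ℝ) (ht : 0 < t) (x y : Fin (n+2) → ℝ) (j : Fin (n+1)) :
    deriv (fun s => H n t (Function.update x j.castSucc s) y) (x j.castSucc) =
      -(x j.castSucc - y j.castSucc) / (2*t) * H n t x y := by
  classical
  have hsum : ∀ s : ℝ,
      (∑ k : Fin (n+1), (Function.update x j.castSucc s k.castSucc - y k.castSucc) ^ 2)
        = (s - y j.castSucc) ^ 2
            + ∑ k ∈ Finset.univ.erase j, (x k.castSucc - y k.castSucc) ^ 2 := by
    intro s
    rw [← Finset.add_sum_erase _ _ (Finset.mem_univ j), Function.update_self]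
    congr 1
    refine Finset.sum_congr rfl fun k hk => ?_
    rw [Function.update_of_ne
      (fun h => (Finset.ne_of_mem_erase hk) (Fin.castSucc_injective _ h))]
  set R : ℝ := ∑ k ∈ Finset.univ.erase j, (x k.castSucc - y k.castSucc) ^ 2 with hR
  have hfun : (fun s => H n t (Function.update x j.castSucc s) y)
      = fun s => ((4 * π * t) ^ (-((n : ℝ) + 1) / 2) *
          Real.exp (-((s - y j.castSucc) ^ 2 + R) / (4 * t))) *
          (G1 t (x (Fin.last (n+1)) - y (Fin.last (n+1))) -
           G1 t (x (Fin.last (n+1)) + y (Fin.last (n+1)))) := by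
    funext s
    simp only [H, Gtan]
    simp only [Function.update_of_ne (Fin.castSucc_lt_last j).ne']
    rw [hsum s]
  rw [hfun]
  have hS : HasDerivAt (fun s : ℝ => -((s - y j.castSucc) ^ 2 + R) / (4 * t))
      (-(x j.castSucc - y j.castSucc) / (2 * t)) (x j.castSucc) := by
    have h0 : HasDerivAt (fun s : ℝ => (s - y j.castSucc) ^ 2 + R)
        (2 * (x j.castSucc - y j.castSucc)) (x j.castSucc) := by
      have := (((hasDerivAt_id (x j.castSucc)).sub_const (y j.castSucc)).pow 2).add_const R
      simpa using this
    have : HasDerivAt (fun s : ℝ => -((s - y j.castSucc) ^ 2 + R) / (4 * t)) _ (x j.castSucc) :=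
      (h0.neg).div_const (4 * t)
    convert this using 1
    field_simp
    ring
  have hfull := (((hS.exp).const_mul ((4 * π * t) ^ (-((n : ℝ) + 1) / 2))).mul_const
    (G1 t (x (Fin.last (n+1)) - y (Fin.last (n+1))) -
     G1 t (x (Fin.last (n+1)) + y (Fin.last (n+1))))).deriv
  rw [hfull]
  have hgt : Gtan n t (fun i => x i.castSucc - y i.castSucc)
      = (4 * π * t) ^ (-((n : ℝ) + 1) / 2) *
          Real.exp (-((x j.castSucc - y j.castSucc) ^ 2 + R) / (4 * t)) := by
    have h1 := hsum (x j.castSucc)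
    rw [Function.update_eq_self] at h1
    simp only [Gtan]
    rw [h1]
  simp only [H, hgt]
  ring

/-- For `d = n+2 ≥ 2` there is `C > 0` (depending only on `d`) such that for all
`t > 0` and all `x, y` in the half space:
`|∇_x H(x,y,t)| ≤ C H(x,y,t) [ t^{−1/2}(1 + |x−y|/√t) + 1/x_d ]`. -/
theorem stmt_4 (n : ℕ) :
    ∃ C : ℝ, 0 < C ∧ ∀ t : ℝ, 0 < t → ∀ x y : Fin (n + 2) → ℝ,
      0 < x (Fin.last (n + 1)) → 0 < y (Fin.last (n + 1)) →
      Real.sqrt (∑ i : Fin (n + 2),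
          (deriv (fun s => H n t (Function.update x i s) y) (x i)) ^ 2) ≤
        C * H n t x y *
          (t ^ (-(1 : ℝ) / 2) * (1 + Real.sqrt (∑ i, (x i - y i) ^ 2) / Real.sqrt t) +
            1 / x (Fin.last (n + 1))) := by
  refine ⟨(n : ℝ) + 2, by positivity, ?_⟩
  intro t ht x y hx hy
  have hπt : (0:ℝ) < 4 * π * t := by positivity
  have hgt : 0 < Gtan n t (fun i => x i.castSucc - y i.castSucc) := by
    unfold Gtan; positivity
  have hG1p : 0 < G1 t (x (Fin.last (n+1)) + y (Fin.last (n+1))) := by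
    unfold G1; positivity
  have hab : 0 < x (Fin.last (n+1)) * y (Fin.last (n+1)) / t := by positivity
  have hEm : G1 t (x (Fin.last (n+1)) - y (Fin.last (n+1)))
      = G1 t (x (Fin.last (n+1)) + y (Fin.last (n+1)))
        * Real.exp (x (Fin.last (n+1)) * y (Fin.last (n+1)) / t) := by
    unfold G1
    conv_rhs => rw [mul_assoc, ← Real.exp_add]
    congr 1
    field_simp
    ring
  have hexp1 : x (Fin.last (n+1)) * y (Fin.last (n+1)) / t + 1
      ≤ Real.exp (x (Fin.last (n+1)) * y (Fin.last (n+1)) / t) :=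
    Real.add_one_le_exp _
  have hD : 0 < G1 t (x (Fin.last (n+1)) - y (Fin.last (n+1)))
      - G1 t (x (Fin.last (n+1)) + y (Fin.last (n+1))) := by
    rw [hEm]
    nlinarith [hG1p, hab, hexp1]
  have hH : 0 < H n t x y := by
    unfold H; exact mul_pos hgt hD
  set M := Real.sqrt (∑ i, (x i - y i) ^ 2) with hMdef
  have hM0 : 0 ≤ M := Real.sqrt_nonneg _
  have hM : ∀ i, |x i - y i| ≤ M := by
    intro i
    rw [← Real.sqrt_sq_eq_abs]
    exact Real.sqrt_le_sqrt (Finset.single_le_sum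
      (f := fun i => (x i - y i) ^ 2) (fun k _ => sq_nonneg _) (Finset.mem_univ i))
  -- key inequality : b/t * G1p ≤ D / a
  have hkey : y (Fin.last (n+1)) / t * G1 t (x (Fin.last (n+1)) + y (Fin.last (n+1)))
      ≤ (G1 t (x (Fin.last (n+1)) - y (Fin.last (n+1)))
        - G1 t (x (Fin.last (n+1)) + y (Fin.last (n+1)))) / x (Fin.last (n+1)) := by
    rw [le_div_iff₀ hx, hEm]
    have h := mul_le_mul_of_nonneg_right hexp1 hG1p.le
    have h2 : y (Fin.last (n+1)) / t * G1 t (x (Fin.last (n+1)) + y (Fin.last (n+1)))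
        * x (Fin.last (n+1))
        = (x (Fin.last (n+1)) * y (Fin.last (n+1)) / t)
            * G1 t (x (Fin.last (n+1)) + y (Fin.last (n+1))) := by ring
    linarith [h2]
  have hd_tan : ∀ j : Fin (n+1),
      |deriv (fun s => H n t (Function.update x j.castSucc s) y) (x j.castSucc)|
        ≤ M / (2*t) * H n t x y := by
    intro j
    rw [deriv_H_tangential n t ht x y j, abs_mul, abs_of_pos hH, abs_div, abs_neg,
      abs_of_pos (by positivity : (0:ℝ) < 2*t)]
    gcongr
    exact hM _
  have hd_last : |deriv (fun s => H n t (Function.update x (Fin.last (n+1)) s) y)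
        (x (Fin.last (n+1)))|
      ≤ M / (2*t) * H n t x y + H n t x y / x (Fin.last (n+1)) := by
    rw [deriv_H_last n t x y]
    have hsplit : (-(x (Fin.last (n+1)) - y (Fin.last (n+1))) / (2*t) *
            G1 t (x (Fin.last (n+1)) - y (Fin.last (n+1)))
          - -(x (Fin.last (n+1)) + y (Fin.last (n+1))) / (2*t) *
            G1 t (x (Fin.last (n+1)) + y (Fin.last (n+1))))
        = (-(x (Fin.last (n+1)) - y (Fin.last (n+1))) / (2*t)) *
            (G1 t (x (Fin.last (n+1)) - y (Fin.last (n+1)))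
              - G1 t (x (Fin.last (n+1)) + y (Fin.last (n+1))))
          + (y (Fin.last (n+1)) / t) * G1 t (x (Fin.last (n+1)) + y (Fin.last (n+1))) := by
      ring
    rw [hsplit, mul_add]
    refine (abs_add_le _ _).trans ?_
    gcongr ?_ + ?_
    · rw [abs_mul, abs_of_pos hgt, abs_mul, abs_of_pos hD, abs_div, abs_neg,
        abs_of_pos (by positivity : (0:ℝ) < 2*t)]
      calc Gtan n t (fun i => x i.castSucc - y i.castSucc) *
            (|x (Fin.last (n+1)) - y (Fin.last (n+1))| / (2*t) *
              (G1 t (x (Fin.last (n+1)) - y (Fin.last (n+1)))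
                - G1 t (x (Fin.last (n+1)) + y (Fin.last (n+1)))))
          ≤ Gtan n t (fun i => x i.castSucc - y i.castSucc) *
            (M / (2*t) *
              (G1 t (x (Fin.last (n+1)) - y (Fin.last (n+1)))
                - G1 t (x (Fin.last (n+1)) + y (Fin.last (n+1))))) := by
            gcongr
            exact hM _
        _ = M / (2*t) * H n t x y := by unfold H; ring
    · rw [abs_mul, abs_of_pos hgt, abs_mul, abs_of_pos hG1p, abs_div,
        abs_of_pos hy, abs_of_pos ht]
      calc Gtan n t (fun i => x i.castSucc - y i.castSucc) *
            (y (Fin.last (n+1)) / t * G1 t (x (Fin.last (n+1)) + y (Fin.last (n+1))))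
          ≤ Gtan n t (fun i => x i.castSucc - y i.castSucc) *
            ((G1 t (x (Fin.last (n+1)) - y (Fin.last (n+1)))
              - G1 t (x (Fin.last (n+1)) + y (Fin.last (n+1)))) / x (Fin.last (n+1))) := by
            gcongr
        _ = H n t x y / x (Fin.last (n+1)) := by unfold H; ring
  have hst : 0 < Real.sqrt t := Real.sqrt_pos.mpr ht
  have hsq : Real.sqrt t * Real.sqrt t = t := Real.mul_self_sqrt ht.le
  have hrpow : t ^ (-(1:ℝ)/2) = (Real.sqrt t)⁻¹ := by
    rw [show (-(1:ℝ)/2) = -(1/2 : ℝ) by norm_num, Real.rpow_neg ht.le, ← Real.sqrt_eq_rpow]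
  have h3 : (Real.sqrt t)⁻¹ * (M / Real.sqrt t) = M / t := by
    rw [inv_mul_eq_div, div_div, hsq]
  have hid : (Real.sqrt t)⁻¹ * (1 + M / Real.sqrt t) = (Real.sqrt t)⁻¹ + M / t := by
    rw [mul_add, mul_one, h3]
  calc Real.sqrt (∑ i : Fin (n + 2),
          (deriv (fun s => H n t (Function.update x i s) y) (x i)) ^ 2)
      ≤ ∑ i : Fin (n+2), |deriv (fun s => H n t (Function.update x i s) y) (x i)| :=
        sqrt_sum_sq_le_sum_abs _
    _ = (∑ j : Fin (n+1),
          |deriv (fun s => H n t (Function.update x j.castSucc s) y) (x j.castSucc)|)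
        + |deriv (fun s => H n t (Function.update x (Fin.last (n+1)) s) y)
            (x (Fin.last (n+1)))| := Fin.sum_univ_castSucc _
    _ ≤ (∑ _j : Fin (n+1), M / (2*t) * H n t x y)
        + (M / (2*t) * H n t x y + H n t x y / x (Fin.last (n+1))) :=
        add_le_add (Finset.sum_le_sum fun j _ => hd_tan j) hd_last
    _ = ((n:ℝ)+1) * (M / (2*t) * H n t x y)
        + (M / (2*t) * H n t x y + H n t x y / x (Fin.last (n+1))) := by
        rw [Finset.sum_const, Finset.card_univ, Fintype.card_fin, nsmul_eq_mul]
        push_cast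
        ring
    _ ≤ ((n:ℝ)+2) * H n t x y *
          (t ^ (-(1:ℝ)/2) * (1 + M / Real.sqrt t) + 1 / x (Fin.last (n+1))) := by
        rw [hrpow, hid]
        have e1 : M / (2*t) ≤ M / t := by
          rw [div_le_div_iff₀ (by positivity) ht]
          nlinarith [mul_nonneg hM0 ht.le]
        have e2 : ((n:ℝ)+2) * (M / (2*t) * H n t x y) ≤ ((n:ℝ)+2) * (M / t * H n t x y) := by
          gcongr
        have e3 : (0:ℝ) ≤ ((n:ℝ)+2) * H n t x y * (Real.sqrt t)⁻¹ := by positivity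
        have e4 : H n t x y / x (Fin.last (n+1))
            ≤ ((n:ℝ)+2) * (H n t x y / x (Fin.last (n+1))) := by
          nlinarith [div_nonneg hH.le hx.le, Nat.cast_nonneg (α := ℝ) n,
            mul_nonneg (Nat.cast_nonneg (α := ℝ) n) (div_nonneg hH.le hx.le)]
        have hdist : ((n:ℝ)+2) * H n t x y *
              ((Real.sqrt t)⁻¹ + M / t + 1 / x (Fin.last (n+1)))
            = ((n:ℝ)+2) * (M / t * H n t x y)
              + (((n:ℝ)+2) * H n t x y * (Real.sqrt t)⁻¹
                + ((n:ℝ)+2) * (H n t x y / x (Fin.last (n+1)))) := by ring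
        rw [hdist]
        linarith [e2, e3, e4]
end

section
/- Let d ≥ 2. There exists a constant C > 0 (depending only on d) such that for all t > 0 and all x ∈ ℝ^d₊: ∫_{ℝ^d₊} |∇_x (∇_x + ∇_y) H(x,y,t)| dy ≤ C t^{−1} e^{−x_d²/(8t)}. -/
open MeasureTheory Real Set

/-- Component `i` of the vector `(∇_x + ∇_y) H(x,y,t)`. -/
noncomputable def D1 (n : ℕ) (t : ℝ) (i : Fin (n + 2)) (x y : Fin (n + 2) → ℝ) : ℝ :=
  deriv (fun s => H n t (Function.update x i s) y) (x i) +
    deriv (fun s => H n t x (Function.update y i s)) (y i)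

/-- Entry `(k,i)` of the matrix `∇_x (∇_x + ∇_y) H(x,y,t)`, i.e. `∂_{x_k}(∂_{x_i}+∂_{y_i})H`. -/
noncomputable def D2 (n : ℕ) (t : ℝ) (k i : Fin (n + 2)) (x y : Fin (n + 2) → ℝ) : ℝ :=
  deriv (fun s => D1 n t i (Function.update x k s) y) (x k)

/-- derivative of the 1D kernel -/
noncomputable def dG1 (t ξ : ℝ) : ℝ := -ξ / (2 * t) * G1 t ξ

/-- second derivative of the 1D kernel -/
noncomputable def ddG1 (t ξ : ℝ) : ℝ := (ξ ^ 2 / (4 * t ^ 2) - 1 / (2 * t)) * G1 t ξ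

lemma hasDerivAt_G1_s8 {t : ℝ} (ht : 0 < t) (ξ : ℝ) : HasDerivAt (G1 t) (dG1 t ξ) ξ := by
  have h1 : HasDerivAt (fun ξ : ℝ => -ξ ^ 2 / (4 * t)) (-ξ / (2 * t)) ξ := by
    have := ((hasDerivAt_pow 2 ξ).neg).div_const (4 * t)
    refine this.congr_deriv ?_
    ring
  have h2 := (h1.exp).const_mul ((4 * π * t) ^ (-(1 : ℝ) / 2))
  refine h2.congr_deriv ?_
  simp [G1, dG1]; ring

lemma hasDerivAt_dG1 {t : ℝ} (ht : 0 < t) (ξ : ℝ) : HasDerivAt (dG1 t) (ddG1 t ξ) ξ := by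
  have h1 : HasDerivAt (fun ξ : ℝ => -ξ / (2 * t)) (-1 / (2 * t)) ξ := by
    simpa using (((hasDerivAt_id ξ).neg).div_const (2 * t))
  have h2 := h1.mul (hasDerivAt_G1_s8 ht ξ)
  refine h2.congr_deriv ?_
  simp only [ddG1, dG1, G1]
  field_simp
  ring

lemma hasDerivAt_Gtan_update {n : ℕ} {t : ℝ} (ht : 0 < t) (v : Fin (n + 1) → ℝ)
    (j : Fin (n + 1)) (s : ℝ) :
    HasDerivAt (fun s => Gtan n t (Function.update v j s))
      (-s / (2 * t) * Gtan n t (Function.update v j s)) s := by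
  have key : ∀ s : ℝ, Gtan n t (Function.update v j s) =
      (4 * π * t) ^ (-((n : ℝ) + 1) / 2) *
        Real.exp (-(s ^ 2 + ∑ i ∈ Finset.univ.erase j, (v i) ^ 2) / (4 * t)) := by
    intro s
    have : ∑ i, (Function.update v j s i) ^ 2
        = s ^ 2 + ∑ i ∈ Finset.univ.erase j, (v i) ^ 2 := by
      have h := Finset.sum_update_of_mem (Finset.mem_univ j) (fun i => (v i) ^ 2) (s ^ 2)
      calc ∑ i, (Function.update v j s i) ^ 2
          = ∑ i, Function.update (fun i => (v i) ^ 2) j (s ^ 2) i := by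
            refine Finset.sum_congr rfl fun i _ => ?_
            exact (Function.apply_update (fun _ x => x ^ 2) v j s i)
        _ = s ^ 2 + ∑ i ∈ Finset.univ.erase j, (v i) ^ 2 := by
            rw [h, Finset.erase_eq]
    rw [Gtan, this]
  have h1 : HasDerivAt (fun s : ℝ => -(s ^ 2 + ∑ i ∈ Finset.univ.erase j, (v i) ^ 2) / (4 * t))
      (-s / (2 * t)) s := by
    have := (((hasDerivAt_pow 2 s).add_const (∑ i ∈ Finset.univ.erase j, (v i) ^ 2)).neg).div_const (4 * t)
    refine this.congr_deriv ?_
    ring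
  have h2 := (h1.exp).const_mul ((4 * π * t) ^ (-((n : ℝ) + 1) / 2))
  have h3 : (fun s => Gtan n t (Function.update v j s)) = fun s =>
      (4 * π * t) ^ (-((n : ℝ) + 1) / 2) *
        Real.exp (-(s ^ 2 + ∑ i ∈ Finset.univ.erase j, (v i) ^ 2) / (4 * t)) := funext key
  rw [h3]
  refine h2.congr_deriv ?_
  rw [key]
  ring

lemma vec_update_x (n : ℕ) (x y : Fin (n + 2) → ℝ) (j₀ : Fin (n + 1)) (s : ℝ) :
    (fun j : Fin (n + 1) => Function.update x j₀.castSucc s j.castSucc - y j.castSucc)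
      = Function.update (fun j : Fin (n + 1) => x j.castSucc - y j.castSucc) j₀
          (s - y j₀.castSucc) := by
  funext j
  rcases eq_or_ne j j₀ with h | h
  · subst h; simp
  · rw [Function.update_of_ne (fun hc => h (Fin.castSucc_injective _ hc)),
      Function.update_of_ne h]

lemma vec_update_y (n : ℕ) (x y : Fin (n + 2) → ℝ) (j₀ : Fin (n + 1)) (s : ℝ) :
    (fun j : Fin (n + 1) => x j.castSucc - Function.update y j₀.castSucc s j.castSucc)
      = Function.update (fun j : Fin (n + 1) => x j.castSucc - y j.castSucc) j₀
          (x j₀.castSucc - s) := by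
  funext j
  rcases eq_or_ne j j₀ with h | h
  · subst h; simp
  · rw [Function.update_of_ne (fun hc => h (Fin.castSucc_injective _ hc)),
      Function.update_of_ne h]

lemma D1_castSucc {n : ℕ} {t : ℝ} (ht : 0 < t) (j₀ : Fin (n + 1)) (x y : Fin (n + 2) → ℝ) :
    D1 n t j₀.castSucc x y = 0 := by
  set v : Fin (n + 1) → ℝ := fun j => x j.castSucc - y j.castSucc with hv
  set K : ℝ := G1 t (x (Fin.last (n + 1)) - y (Fin.last (n + 1))) -
      G1 t (x (Fin.last (n + 1)) + y (Fin.last (n + 1))) with hK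
  have hne : (Fin.last (n + 1)) ≠ j₀.castSucc := (Fin.castSucc_lt_last j₀).ne'
  have e1 : (fun s => H n t (Function.update x j₀.castSucc s) y)
      = fun s => Gtan n t (Function.update v j₀ (s - y j₀.castSucc)) * K := by
    funext s
    rw [H, vec_update_x, Function.update_of_ne hne]
  have e2 : (fun s => H n t x (Function.update y j₀.castSucc s))
      = fun s => Gtan n t (Function.update v j₀ (x j₀.castSucc - s)) * K := by
    funext s
    rw [H, vec_update_y, Function.update_of_ne hne]
  have d1 : HasDerivAt (fun s => Gtan n t (Function.update v j₀ (s - y j₀.castSucc)) * K)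
      ((-(v j₀) / (2 * t) * Gtan n t v) * K) (x j₀.castSucc) := by
    have inner : HasDerivAt (fun s : ℝ => s - y j₀.castSucc) 1 (x j₀.castSucc) := by
      simpa using (hasDerivAt_id (x j₀.castSucc)).sub_const (y j₀.castSucc)
    have h := ((hasDerivAt_Gtan_update ht v j₀ (x j₀.castSucc - y j₀.castSucc)).comp
      (x j₀.castSucc) inner).mul_const K
    have hvj : x j₀.castSucc - y j₀.castSucc = v j₀ := rfl
    rw [hvj, Function.update_eq_self] at h
    refine h.congr_deriv ?_
    ring
  have d2 : HasDerivAt (fun s => Gtan n t (Function.update v j₀ (x j₀.castSucc - s)) * K)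
      (-((-(v j₀) / (2 * t) * Gtan n t v) * K)) (y j₀.castSucc) := by
    have inner : HasDerivAt (fun s : ℝ => x j₀.castSucc - s) (-1) (y j₀.castSucc) := by
      simpa using (hasDerivAt_id (y j₀.castSucc)).const_sub (x j₀.castSucc)
    have h := ((hasDerivAt_Gtan_update ht v j₀ (x j₀.castSucc - y j₀.castSucc)).comp
      (y j₀.castSucc) inner).mul_const K
    have hvj : x j₀.castSucc - y j₀.castSucc = v j₀ := rfl
    rw [hvj, Function.update_eq_self] at h
    refine h.congr_deriv ?_
    ring
  rw [D1, e1, e2, d1.deriv, d2.deriv]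
  ring

lemma D1_last {n : ℕ} {t : ℝ} (ht : 0 < t) (x y : Fin (n + 2) → ℝ) :
    D1 n t (Fin.last (n + 1)) x y
      = -2 * Gtan n t (fun j => x j.castSucc - y j.castSucc) *
          dG1 t (x (Fin.last (n + 1)) + y (Fin.last (n + 1))) := by
  set v : Fin (n + 1) → ℝ := fun j => x j.castSucc - y j.castSucc with hv
  set xd := x (Fin.last (n + 1)) with hxd
  set yd := y (Fin.last (n + 1)) with hyd
  have e1 : (fun s => H n t (Function.update x (Fin.last (n + 1)) s) y)
      = fun s => Gtan n t v * (G1 t (s - yd) - G1 t (s + yd)) := by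
    funext s
    rw [H]
    congr 1
    · congr 1
      funext j
      rw [Function.update_of_ne (Fin.castSucc_lt_last j).ne]
    · rw [Function.update_self]
  have e2 : (fun s => H n t x (Function.update y (Fin.last (n + 1)) s))
      = fun s => Gtan n t v * (G1 t (xd - s) - G1 t (xd + s)) := by
    funext s
    rw [H]
    congr 1
    · congr 1
      funext j
      rw [Function.update_of_ne (Fin.castSucc_lt_last j).ne]
    · rw [Function.update_self]
  have d1 : HasDerivAt (fun s => Gtan n t v * (G1 t (s - yd) - G1 t (s + yd)))
      (Gtan n t v * (dG1 t (xd - yd) - dG1 t (xd + yd))) xd := by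
    have i1 : HasDerivAt (fun s : ℝ => s - yd) 1 xd := by
      simpa using (hasDerivAt_id xd).sub_const yd
    have i2 : HasDerivAt (fun s : ℝ => s + yd) 1 xd := by
      simpa using (hasDerivAt_id xd).add_const yd
    have h1 := (hasDerivAt_G1_s8 ht (xd - yd)).comp xd i1
    have h2 := (hasDerivAt_G1_s8 ht (xd + yd)).comp xd i2
    have := (h1.sub h2).const_mul (Gtan n t v)
    simpa using this
  have d2 : HasDerivAt (fun s => Gtan n t v * (G1 t (xd - s) - G1 t (xd + s)))
      (Gtan n t v * (-dG1 t (xd - yd) - dG1 t (xd + yd))) yd := by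
    have i1 : HasDerivAt (fun s : ℝ => xd - s) (-1) yd := by
      simpa using (hasDerivAt_id yd).const_sub xd
    have i2 : HasDerivAt (fun s : ℝ => xd + s) 1 yd := by
      exact ((hasDerivAt_const yd xd).add (hasDerivAt_id yd)).congr_deriv (zero_add 1)
    have h1 := (hasDerivAt_G1_s8 ht (xd - yd)).comp yd i1
    have h2 := (hasDerivAt_G1_s8 ht (xd + yd)).comp yd i2
    have := (h1.sub h2).const_mul (Gtan n t v)
    refine this.congr_deriv ?_
    ring
  rw [D1, e1, e2, d1.deriv, d2.deriv]
  ring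

lemma D2_i_castSucc {n : ℕ} {t : ℝ} (ht : 0 < t) (k : Fin (n + 2)) (j₀ : Fin (n + 1))
    (x y : Fin (n + 2) → ℝ) : D2 n t k j₀.castSucc x y = 0 := by
  rw [D2]
  have e : (fun s => D1 n t j₀.castSucc (Function.update x k s) y) = fun _ => (0 : ℝ) :=
    funext fun s => D1_castSucc ht j₀ _ y
  rw [e, deriv_const]

lemma D2_castSucc_last {n : ℕ} {t : ℝ} (ht : 0 < t) (m : Fin (n + 1)) (x y : Fin (n + 2) → ℝ) :
    D2 n t m.castSucc (Fin.last (n + 1)) x y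
      = (x m.castSucc - y m.castSucc) / t *
          Gtan n t (fun j => x j.castSucc - y j.castSucc) *
          dG1 t (x (Fin.last (n + 1)) + y (Fin.last (n + 1))) := by
  set v : Fin (n + 1) → ℝ := fun j => x j.castSucc - y j.castSucc with hv
  set xd := x (Fin.last (n + 1)) with hxd
  set yd := y (Fin.last (n + 1)) with hyd
  rw [D2]
  have e : (fun s => D1 n t (Fin.last (n + 1)) (Function.update x m.castSucc s) y)
      = fun s => -2 * Gtan n t (Function.update v m (s - y m.castSucc)) * dG1 t (xd + yd) := by
    funext s
    rw [D1_last ht, vec_update_x, Function.update_of_ne (Fin.castSucc_lt_last m).ne']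
  rw [e]
  have inner : HasDerivAt (fun s : ℝ => s - y m.castSucc) 1 (x m.castSucc) := by
    simpa using (hasDerivAt_id (x m.castSucc)).sub_const (y m.castSucc)
  have h := (((hasDerivAt_Gtan_update ht v m (x m.castSucc - y m.castSucc)).comp
      (x m.castSucc) inner).const_mul (-2 : ℝ)).mul_const (dG1 t (xd + yd))
  have hvj : x m.castSucc - y m.castSucc = v m := rfl
  rw [hvj, Function.update_eq_self] at h
  have h' : HasDerivAt
      (fun s => -2 * Gtan n t (Function.update v m (s - y m.castSucc)) * dG1 t (xd + yd))
      (v m / t * Gtan n t v * dG1 t (xd + yd)) (x m.castSucc) := by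
    refine h.congr_deriv ?_
    field_simp
    
  rw [h'.deriv]

lemma D2_last_last {n : ℕ} {t : ℝ} (ht : 0 < t) (x y : Fin (n + 2) → ℝ) :
    D2 n t (Fin.last (n + 1)) (Fin.last (n + 1)) x y
      = -2 * Gtan n t (fun j => x j.castSucc - y j.castSucc) *
          ddG1 t (x (Fin.last (n + 1)) + y (Fin.last (n + 1))) := by
  set v : Fin (n + 1) → ℝ := fun j => x j.castSucc - y j.castSucc with hv
  set xd := x (Fin.last (n + 1)) with hxd
  set yd := y (Fin.last (n + 1)) with hyd
  rw [D2]
  have e : (fun s => D1 n t (Fin.last (n + 1)) (Function.update x (Fin.last (n + 1)) s) y)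
      = fun s => -2 * Gtan n t v * dG1 t (s + yd) := by
    funext s
    rw [D1_last ht, Function.update_self]
    congr 3
    funext j
    rw [Function.update_of_ne (Fin.castSucc_lt_last j).ne]
  rw [e]
  have inner : HasDerivAt (fun s : ℝ => s + yd) 1 xd := by
    simpa using (hasDerivAt_id xd).add_const yd
  have h := ((hasDerivAt_dG1 ht (xd + yd)).comp xd inner).const_mul (-2 * Gtan n t v)
  have h' : HasDerivAt (fun s => -2 * Gtan n t v * dG1 t (s + yd))
      (-2 * Gtan n t v * ddG1 t (xd + yd)) xd := by
    refine h.congr_deriv ?_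
    ring
  rw [h'.deriv]

lemma sqrt_sum_sq_le_sum_abs_s8 {N : ℕ} (u : Fin N → ℝ) :
    Real.sqrt (∑ k, (u k) ^ 2) ≤ ∑ k, |u k| := by
  have h1 : ∑ k, (u k) ^ 2 ≤ (∑ k, |u k|) ^ 2 := by
    have hbd : ∀ k : Fin N, (u k) ^ 2 ≤ |u k| * ∑ j, |u j| := by
      intro k
      have hk : |u k| ≤ ∑ j, |u j| :=
        Finset.single_le_sum (f := fun j => |u j|) (fun j _ => abs_nonneg _) (Finset.mem_univ k)
      calc (u k) ^ 2 = |u k| * |u k| := by rw [sq_abs (u k) |>.symm]; ring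
        _ ≤ |u k| * ∑ j, |u j| := mul_le_mul_of_nonneg_left hk (abs_nonneg _)
    calc ∑ k, (u k) ^ 2 ≤ ∑ k, |u k| * ∑ j, |u j| := Finset.sum_le_sum fun k _ => hbd k
      _ = (∑ k, |u k|) ^ 2 := by rw [← Finset.sum_mul]; ring
  calc Real.sqrt (∑ k, (u k) ^ 2) ≤ Real.sqrt ((∑ k, |u k|) ^ 2) := Real.sqrt_le_sqrt h1
    _ = ∑ k, |u k| := Real.sqrt_sq (Finset.sum_nonneg fun k _ => abs_nonneg _)

lemma gauss_lin {t : ℝ} (ht : 0 < t) {u : ℝ} (hu : 0 ≤ u) :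
    u * Real.exp (-u ^ 2 / (8 * t)) ≤ Real.sqrt (8 * t) := by
  have h8t : (0 : ℝ) < 8 * t := by linarith
  have hspos : 0 < Real.sqrt (8 * t) := Real.sqrt_pos.mpr h8t
  have hs : Real.sqrt (8 * t) ^ 2 = 8 * t := Real.sq_sqrt h8t.le
  rcases le_or_gt u (Real.sqrt (8 * t)) with h | h
  · have hexp : Real.exp (-u ^ 2 / (8 * t)) ≤ 1 := by
      rw [Real.exp_le_one_iff]
      exact div_nonpos_of_nonpos_of_nonneg (neg_nonpos.mpr (sq_nonneg u)) h8t.le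
    calc u * Real.exp (-u ^ 2 / (8 * t)) ≤ u * 1 := mul_le_mul_of_nonneg_left hexp hu
      _ = u := mul_one u
      _ ≤ _ := h
  · have hu' : 0 < u := lt_trans hspos h
    have hz : 0 < u ^ 2 / (8 * t) := by positivity
    have hexp : Real.exp (-u ^ 2 / (8 * t)) ≤ (u ^ 2 / (8 * t))⁻¹ := by
      rw [neg_div, Real.exp_neg]
      exact inv_anti₀ hz (by linarith [Real.add_one_le_exp (u ^ 2 / (8 * t))])
    have hinv : (u ^ 2 / (8 * t))⁻¹ = 8 * t / u ^ 2 := by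
      rw [inv_div]
    calc u * Real.exp (-u ^ 2 / (8 * t)) ≤ u * (8 * t / u ^ 2) := by
          rw [← hinv]; exact mul_le_mul_of_nonneg_left hexp hu'.le
      _ = 8 * t / u := by field_simp
      _ ≤ Real.sqrt (8 * t) := by
          rw [div_le_iff₀ hu']
          nlinarith [h.le, hspos]

lemma gauss_quad {t : ℝ} (ht : 0 < t) (u : ℝ) :
    u ^ 2 * Real.exp (-u ^ 2 / (8 * t)) ≤ 8 * t := by
  have h8t : (0 : ℝ) < 8 * t := by linarith
  set z := u ^ 2 / (8 * t) with hzdef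
  have h2 := Real.exp_pos z
  have key : z * Real.exp (-z) ≤ 1 := by
    rw [Real.exp_neg, ← div_eq_mul_inv, div_le_one h2]
    linarith [Real.add_one_le_exp z]
  have harg : -u ^ 2 / (8 * t) = -z := by rw [neg_div]
  have hu2 : u ^ 2 = 8 * t * z := by rw [hzdef]; field_simp
  rw [harg, hu2]
  calc 8 * t * z * Real.exp (-z) = 8 * t * (z * Real.exp (-z)) := by ring
    _ ≤ 8 * t * 1 := mul_le_mul_of_nonneg_left key h8t.le
    _ = 8 * t := mul_one _

lemma exp_split {t : ℝ} (a : ℝ) :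
    Real.exp (-a / (4 * t)) = Real.exp (-a / (8 * t)) * Real.exp (-a / (8 * t)) := by
  rw [← Real.exp_add]; congr 1; ring

lemma exp_cross {t xd yd : ℝ} (ht : 0 < t) (hx : 0 ≤ xd) (hy : 0 ≤ yd) :
    Real.exp (-(xd + yd) ^ 2 / (8 * t)) ≤
      Real.exp (-xd ^ 2 / (8 * t)) * Real.exp (-yd ^ 2 / (8 * t)) := by
  rw [← Real.exp_add, ← add_div]
  apply Real.exp_le_exp.mpr
  rw [div_le_div_iff₀ (by linarith) (by linarith)]
  nlinarith [mul_nonneg hx hy]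

lemma abs_exp_sum_bound {n : ℕ} {t : ℝ} (ht : 0 < t) (v : Fin (n + 1) → ℝ) (m : Fin (n + 1)) :
    |v m| * Real.exp (-(∑ j, (v j) ^ 2) / (8 * t)) ≤ Real.sqrt (8 * t) := by
  have hm : (v m) ^ 2 ≤ ∑ j, (v j) ^ 2 :=
    Finset.single_le_sum (f := fun j => (v j) ^ 2) (fun j _ => sq_nonneg _) (Finset.mem_univ m)
  have hmono : Real.exp (-(∑ j, (v j) ^ 2) / (8 * t)) ≤ Real.exp (-(v m) ^ 2 / (8 * t)) := by
    apply Real.exp_le_exp.mpr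
    rw [div_le_div_iff₀ (by linarith) (by linarith)]
    nlinarith
  calc |v m| * Real.exp (-(∑ j, (v j) ^ 2) / (8 * t))
      ≤ |v m| * Real.exp (-(v m) ^ 2 / (8 * t)) :=
        mul_le_mul_of_nonneg_left hmono (abs_nonneg _)
    _ = |v m| * Real.exp (-|v m| ^ 2 / (8 * t)) := by rw [sq_abs]
    _ ≤ Real.sqrt (8 * t) := gauss_lin ht (abs_nonneg _)

lemma tangential_bound {n : ℕ} {t : ℝ} (ht : 0 < t) (v : Fin (n + 1) → ℝ) (m : Fin (n + 1))
    {xd yd : ℝ} (hx : 0 ≤ xd) (hy : 0 ≤ yd) :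
    |v m / t * Gtan n t v * dG1 t (xd + yd)| ≤
      4 * t⁻¹ * ((4 * π * t) ^ (-((n : ℝ) + 1) / 2) * (4 * π * t) ^ (-(1 : ℝ) / 2)) *
        Real.exp (-xd ^ 2 / (8 * t)) *
        (Real.exp (-(∑ j, (v j) ^ 2) / (8 * t)) * Real.exp (-yd ^ 2 / (8 * t))) := by
  have hP : (0 : ℝ) < 4 * π * t := by positivity
  have h2t : (0 : ℝ) < 2 * t := by linarith
  have hξ : (0 : ℝ) ≤ xd + yd := by linarith
  have hG1pos : 0 < G1 t (xd + yd) := by rw [G1]; positivity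
  have hGpos : 0 < Gtan n t v := by rw [Gtan]; positivity
  have hPa : (0 : ℝ) ≤ (4 * π * t) ^ (-((n : ℝ) + 1) / 2) := (Real.rpow_pos_of_pos hP _).le
  have hPb : (0 : ℝ) ≤ (4 * π * t) ^ (-(1 : ℝ) / 2) := (Real.rpow_pos_of_pos hP _).le
  set S := ∑ j, (v j) ^ 2 with hSdef
  set eS := Real.exp (-S / (8 * t)) with heS
  set eX := Real.exp (-(xd + yd) ^ 2 / (8 * t)) with heX
  have heSpos : 0 < eS := Real.exp_pos _
  have heXpos : 0 < eX := Real.exp_pos _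
  calc |v m / t * Gtan n t v * dG1 t (xd + yd)|
      = (|v m| * eS) * ((xd + yd) * eX) *
          ((1 / (2 * t ^ 2)) * ((4 * π * t) ^ (-((n : ℝ) + 1) / 2) *
            (4 * π * t) ^ (-(1 : ℝ) / 2))) * (eS * eX) := by
        rw [abs_mul, abs_mul, abs_div, abs_of_pos ht, abs_of_pos hGpos, dG1, abs_mul,
          abs_of_pos hG1pos, abs_div, abs_neg, abs_of_nonneg hξ, abs_of_pos h2t,
          Gtan, G1, ← hSdef, exp_split S, exp_split ((xd + yd) ^ 2), ← heS, ← heX]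
        ring
    _ ≤ (Real.sqrt (8 * t)) * (Real.sqrt (8 * t)) *
          ((1 / (2 * t ^ 2)) * ((4 * π * t) ^ (-((n : ℝ) + 1) / 2) *
            (4 * π * t) ^ (-(1 : ℝ) / 2))) *
          (eS * (Real.exp (-xd ^ 2 / (8 * t)) * Real.exp (-yd ^ 2 / (8 * t)))) := by
        have b1 : |v m| * eS ≤ Real.sqrt (8 * t) := abs_exp_sum_bound ht v m
        have b2 : (xd + yd) * eX ≤ Real.sqrt (8 * t) := gauss_lin ht hξ
        have b3 : eX ≤ Real.exp (-xd ^ 2 / (8 * t)) * Real.exp (-yd ^ 2 / (8 * t)) :=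
          exp_cross ht hx hy
        gcongr <;>
          first
            | positivity
            | exact mul_nonneg (abs_nonneg _) heSpos.le
            | exact mul_nonneg hξ heXpos.le
            | exact mul_nonneg (mul_nonneg (abs_nonneg _) heSpos.le) (mul_nonneg hξ heXpos.le)
            | exact heSpos.le
            | linarith
    _ = 8 * t * (1 / (2 * t ^ 2)) * ((4 * π * t) ^ (-((n : ℝ) + 1) / 2) *
          (4 * π * t) ^ (-(1 : ℝ) / 2)) *
          (Real.exp (-xd ^ 2 / (8 * t)) * (eS * Real.exp (-yd ^ 2 / (8 * t)))) := by
        rw [Real.mul_self_sqrt (by linarith : (0:ℝ) ≤ 8 * t)]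
        ring
    _ = 4 * t⁻¹ * ((4 * π * t) ^ (-((n : ℝ) + 1) / 2) * (4 * π * t) ^ (-(1 : ℝ) / 2)) *
          Real.exp (-xd ^ 2 / (8 * t)) * (eS * Real.exp (-yd ^ 2 / (8 * t))) := by
        have : 8 * t * (1 / (2 * t ^ 2)) = 4 * t⁻¹ := by
          field_simp
          ring
        rw [this]
        ring

lemma normal_bound {n : ℕ} {t : ℝ} (ht : 0 < t) (v : Fin (n + 1) → ℝ)
    {xd yd : ℝ} (hx : 0 ≤ xd) (hy : 0 ≤ yd) :
    |(-2) * Gtan n t v * ddG1 t (xd + yd)| ≤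
      5 * t⁻¹ * ((4 * π * t) ^ (-((n : ℝ) + 1) / 2) * (4 * π * t) ^ (-(1 : ℝ) / 2)) *
        Real.exp (-xd ^ 2 / (8 * t)) *
        (Real.exp (-(∑ j, (v j) ^ 2) / (8 * t)) * Real.exp (-yd ^ 2 / (8 * t))) := by
  have hP : (0 : ℝ) < 4 * π * t := by positivity
  have h2t : (0 : ℝ) < 2 * t := by linarith
  have hξ : (0 : ℝ) ≤ xd + yd := by linarith
  have hG1pos : 0 < G1 t (xd + yd) := by rw [G1]; positivity
  have hGpos : 0 < Gtan n t v := by rw [Gtan]; positivity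
  set S := ∑ j, (v j) ^ 2 with hSdef
  have hS0 : 0 ≤ S := Finset.sum_nonneg fun j _ => sq_nonneg _
  set eS := Real.exp (-S / (8 * t)) with heS
  set eX := Real.exp (-(xd + yd) ^ 2 / (8 * t)) with heX
  have heSpos : 0 < eS := Real.exp_pos _
  have heXpos : 0 < eX := Real.exp_pos _
  have heS1 : eS ≤ 1 := by
    rw [heS, Real.exp_le_one_iff]
    apply div_nonpos_of_nonpos_of_nonneg (by linarith) (by linarith)
  have habs : |(xd + yd) ^ 2 / (4 * t ^ 2) - 1 / (2 * t)| ≤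
      (xd + yd) ^ 2 / (4 * t ^ 2) + 1 / (2 * t) := by
    refine (abs_sub _ _).trans ?_
    rw [abs_of_nonneg (by positivity), abs_of_nonneg (by positivity : (0:ℝ) ≤ 1 / (2*t))]
  have hq : ((xd + yd) ^ 2 / (4 * t ^ 2) + 1 / (2 * t)) * eX ≤ 5 / (2 * t) := by
    have q1 : (xd + yd) ^ 2 * eX ≤ 8 * t := gauss_quad ht (xd + yd)
    have q2 : eX ≤ 1 := by
      rw [heX, Real.exp_le_one_iff]
      apply div_nonpos_of_nonpos_of_nonneg (neg_nonpos.mpr (sq_nonneg _)) (by linarith)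
    have ht2 : (0 : ℝ) < t ^ 2 := by positivity
    have e1 : ((xd + yd) ^ 2 / (4 * t ^ 2)) * eX = ((xd + yd) ^ 2 * eX) / (4 * t ^ 2) := by
      ring
    have e2 : ((xd + yd) ^ 2 / (4 * t ^ 2)) * eX ≤ 2 / t := by
      rw [e1]
      calc ((xd + yd) ^ 2 * eX) / (4 * t ^ 2) ≤ (8 * t) / (4 * t ^ 2) := by
            gcongr
        _ = 2 / t := by field_simp; ring
    have e3 : (1 / (2 * t)) * eX ≤ 1 / (2 * t) :=
      mul_le_of_le_one_right (by positivity) q2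
    have e4 : (2 : ℝ) / t + 1 / (2 * t) = 5 / (2 * t) := by field_simp; ring
    nlinarith [e2, e3]
  have e0 : |(-2 : ℝ) * Gtan n t v * ddG1 t (xd + yd)|
      = 2 * Gtan n t v * (|(xd + yd) ^ 2 / (4 * t ^ 2) - 1 / (2 * t)| * G1 t (xd + yd)) := by
    rw [ddG1, abs_mul, abs_mul, abs_mul, abs_of_pos hGpos, abs_of_pos hG1pos]
    norm_num
  rw [e0]
  calc 2 * Gtan n t v * (|(xd + yd) ^ 2 / (4 * t ^ 2) - 1 / (2 * t)| * G1 t (xd + yd))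
      ≤ 2 * Gtan n t v *
          (((xd + yd) ^ 2 / (4 * t ^ 2) + 1 / (2 * t)) * G1 t (xd + yd)) := by
        gcongr <;> first | positivity | exact hG1pos.le | exact hGpos.le | linarith
    _ = (((xd + yd) ^ 2 / (4 * t ^ 2) + 1 / (2 * t)) * eX) * eS *
          (2 * ((4 * π * t) ^ (-((n : ℝ) + 1) / 2) * (4 * π * t) ^ (-(1 : ℝ) / 2))) *
          (eS * eX) := by
        rw [Gtan, G1, ← hSdef, exp_split S, exp_split ((xd + yd) ^ 2), ← heS, ← heX]
        ring
    _ ≤ (5 / (2 * t)) * 1 *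
          (2 * ((4 * π * t) ^ (-((n : ℝ) + 1) / 2) * (4 * π * t) ^ (-(1 : ℝ) / 2))) *
          (eS * (Real.exp (-xd ^ 2 / (8 * t)) * Real.exp (-yd ^ 2 / (8 * t)))) := by
        have b3 : eX ≤ Real.exp (-xd ^ 2 / (8 * t)) * Real.exp (-yd ^ 2 / (8 * t)) :=
          exp_cross ht hx hy
        gcongr <;>
          first
            | positivity
            | exact mul_nonneg (by positivity) heXpos.le
            | exact heSpos.le
            | exact heXpos.le
            | linarith
    _ = 5 * t⁻¹ * ((4 * π * t) ^ (-((n : ℝ) + 1) / 2) * (4 * π * t) ^ (-(1 : ℝ) / 2)) *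
          Real.exp (-xd ^ 2 / (8 * t)) *
          (eS * Real.exp (-yd ^ 2 / (8 * t))) := by
        field_simp
        

lemma integrable_gauss_shift {t : ℝ} (ht : 0 < t) (c : ℝ) :
    Integrable (fun u : ℝ => Real.exp (-(u - c) ^ 2 / (8 * t))) := by
  have h : Integrable (fun u : ℝ => Real.exp (-(1 / (8 * t)) * u ^ 2)) :=
    integrable_exp_neg_mul_sq (by positivity)
  have heq : (fun u : ℝ => Real.exp (-(u - c) ^ 2 / (8 * t)))
      = fun u => Real.exp (-(1 / (8 * t)) * (u - c) ^ 2) := by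
    funext u; congr 1; field_simp
  rw [heq]
  exact h.comp_sub_right c

lemma integral_gauss_shift {t : ℝ} (ht : 0 < t) (c : ℝ) :
    ∫ u : ℝ, Real.exp (-(u - c) ^ 2 / (8 * t)) = Real.sqrt (8 * π * t) := by
  have heq : (fun u : ℝ => Real.exp (-(u - c) ^ 2 / (8 * t)))
      = fun u => Real.exp (-(1 / (8 * t)) * (u - c) ^ 2) := by
    funext u; congr 1; field_simp
  rw [heq]
  rw [integral_sub_right_eq_self (fun u : ℝ => Real.exp (-(1 / (8 * t)) * u ^ 2)) c]
  rw [integral_gaussian]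
  congr 1
  field_simp
  

lemma rpow_calc (n : ℕ) {t : ℝ} (ht : 0 < t) :
    ((4 * π * t) ^ (-((n : ℝ) + 1) / 2) * (4 * π * t) ^ (-(1 : ℝ) / 2)) *
      Real.sqrt (8 * π * t) ^ (n + 2) ≤ 2 ^ (n + 2) := by
  have hP : (0 : ℝ) < 4 * π * t := by positivity
  have h1 : (4 * π * t) ^ (-((n : ℝ) + 1) / 2) * (4 * π * t) ^ (-(1 : ℝ) / 2)
      = (4 * π * t) ^ (-(((n : ℝ) + 2) / 2)) := by
    rw [← Real.rpow_add hP]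
    congr 1
    ring
  have h2 : (8 : ℝ) * π * t = 2 * (4 * π * t) := by ring
  have h3 : Real.sqrt (8 * π * t) ^ (n + 2) = (2 * (4 * π * t)) ^ (((n : ℝ) + 2) / 2) := by
    rw [h2, Real.sqrt_eq_rpow, ← Real.rpow_natCast ((2 * (4 * π * t)) ^ ((1:ℝ)/2)) (n + 2),
      ← Real.rpow_mul (by positivity)]
    congr 1
    push_cast
    ring
  rw [h1, h3, Real.mul_rpow (by norm_num) hP.le, ← mul_assoc,
    mul_comm ((4 * π * t) ^ (-(((n : ℝ) + 2) / 2))), mul_assoc,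
    ← Real.rpow_add hP]
  rw [neg_add_cancel, Real.rpow_zero, mul_one]
  calc (2 : ℝ) ^ (((n : ℝ) + 2) / 2) ≤ 2 ^ ((n : ℝ) + 2) := by
        apply Real.rpow_le_rpow_of_exponent_le one_le_two
        have : (0 : ℝ) ≤ (n : ℝ) := Nat.cast_nonneg n
        linarith
    _ = 2 ^ (n + 2) := by
        rw [show ((n : ℝ) + 2) = ((n + 2 : ℕ) : ℝ) by push_cast; ring, Real.rpow_natCast]

/-- For `d = n+2 ≥ 2` there is `C > 0` (depending only on `d`) such that for all
`t > 0` and all `x` in the half space: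
`∫_{ℝ^d₊} |∇_x(∇_x+∇_y)H(x,y,t)| dy ≤ C t⁻¹ e^{−x_d²/(8t)}`. -/
theorem stmt_8 (n : ℕ) :
    ∃ C : ℝ, 0 < C ∧ ∀ t : ℝ, 0 < t → ∀ x : Fin (n + 2) → ℝ,
      0 < x (Fin.last (n + 1)) →
      (∫ y in {y : Fin (n + 2) → ℝ | 0 < y (Fin.last (n + 1))},
          Real.sqrt (∑ k, ∑ i, (D2 n t k i x y) ^ 2)) ≤
        C * t⁻¹ * Real.exp (-(x (Fin.last (n + 1))) ^ 2 / (8 * t)) := by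
  refine ⟨(4 * ((n : ℝ) + 1) + 5) * 2 ^ (n + 2), by positivity, ?_⟩
  intro t ht x hxd
  have hP : (0 : ℝ) < 4 * π * t := by positivity
  have hApos : 0 < (4 * π * t) ^ (-((n : ℝ) + 1) / 2) * (4 * π * t) ^ (-(1 : ℝ) / 2) :=
    mul_pos (Real.rpow_pos_of_pos hP _) (Real.rpow_pos_of_pos hP _)
  have hS : MeasurableSet {y : Fin (n + 2) → ℝ | 0 < y (Fin.last (n + 1))} :=
    measurableSet_lt measurable_const (measurable_pi_apply _)
  set w : Fin (n + 2) → ℝ := Function.update x (Fin.last (n + 1)) 0 with hw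
  set Φ : (Fin (n + 2) → ℝ) → ℝ :=
    fun y => ∏ j, Real.exp (-(y j - w j) ^ 2 / (8 * t)) with hΦ
  set K0 : ℝ := (4 * ((n : ℝ) + 1) + 5) * t⁻¹ *
      ((4 * π * t) ^ (-((n : ℝ) + 1) / 2) * (4 * π * t) ^ (-(1 : ℝ) / 2)) *
      Real.exp (-(x (Fin.last (n + 1))) ^ 2 / (8 * t)) with hK0
  have hK0pos : 0 < K0 := by
    rw [hK0]
    have h1 : (0 : ℝ) < 4 * ((n : ℝ) + 1) + 5 := by positivity
    exact mul_pos (mul_pos (mul_pos h1 (inv_pos.mpr ht)) hApos) (Real.exp_pos _)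
  set g : (Fin (n + 2) → ℝ) → ℝ := fun y => K0 * Φ y with hg
  have hΦnonneg : ∀ y, 0 ≤ Φ y := fun y =>
    Finset.prod_nonneg fun j _ => (Real.exp_pos _).le
  -- reduce the double sum
  have hrow : ∀ y : Fin (n + 2) → ℝ, (∑ k, ∑ i, (D2 n t k i x y) ^ 2)
      = ∑ k, (D2 n t k (Fin.last (n + 1)) x y) ^ 2 := by
    intro y
    refine Finset.sum_congr rfl fun k _ => ?_
    rw [Fin.sum_univ_castSucc]
    have hz : ∀ j : Fin (n + 1), D2 n t k (Fin.castSucc j) x y = 0 :=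
      fun j => D2_i_castSucc ht k j x y
    simp [hz]
  -- the explicit version of the integrand
  set F : (Fin (n + 2) → ℝ) → ℝ := fun y =>
    Real.sqrt ((∑ m : Fin (n + 1),
      ((x m.castSucc - y m.castSucc) / t *
        Gtan n t (fun j => x j.castSucc - y j.castSucc) *
        dG1 t (x (Fin.last (n + 1)) + y (Fin.last (n + 1)))) ^ 2) +
      (-2 * Gtan n t (fun j => x j.castSucc - y j.castSucc) *
        ddG1 t (x (Fin.last (n + 1)) + y (Fin.last (n + 1)))) ^ 2) with hF
  have hFeq : ∀ y : Fin (n + 2) → ℝ,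
      Real.sqrt (∑ k, ∑ i, (D2 n t k i x y) ^ 2) = F y := by
    intro y
    rw [hrow y, hF, Fin.sum_univ_castSucc, D2_last_last ht x y]
    congr 2
    exact Finset.sum_congr rfl fun m _ => by rw [D2_castSucc_last ht m x y]
  have hfun : (fun y : Fin (n + 2) → ℝ =>
      Real.sqrt (∑ k, ∑ i, (D2 n t k i x y) ^ 2)) = F := funext hFeq
  have hFc : Continuous F := by
    rw [hF]
    simp only [Gtan, dG1, ddG1, G1]
    fun_prop
  have hFnonneg : ∀ y, 0 ≤ F y := fun y => Real.sqrt_nonneg _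
  -- pointwise bound on the half space
  have hbd : ∀ y ∈ {y : Fin (n + 2) → ℝ | 0 < y (Fin.last (n + 1))}, F y ≤ g y := by
    intro y hy
    have hyd : (0 : ℝ) ≤ y (Fin.last (n + 1)) := le_of_lt hy
    have hΦy : Φ y =
        Real.exp (-(∑ j : Fin (n + 1), (x j.castSucc - y j.castSucc) ^ 2) / (8 * t)) *
          Real.exp (-(y (Fin.last (n + 1))) ^ 2 / (8 * t)) := by
      simp only [hΦ]
      rw [← Real.exp_sum, Fin.sum_univ_castSucc, Real.exp_add]
      congr 2
      · calc ∑ j : Fin (n + 1), -(y j.castSucc - w j.castSucc) ^ 2 / (8 * t)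
            = ∑ j : Fin (n + 1), -((x j.castSucc - y j.castSucc) ^ 2) / (8 * t) := by
              refine Finset.sum_congr rfl fun j _ => ?_
              rw [hw, Function.update_of_ne (Fin.castSucc_lt_last j).ne]
              ring
          _ = -(∑ j : Fin (n + 1), (x j.castSucc - y j.castSucc) ^ 2) / (8 * t) := by
              rw [← Finset.sum_div, ← Finset.sum_neg_distrib]
      · rw [hw, Function.update_self, sub_zero]
    have hF2 : F y = Real.sqrt (∑ k, (D2 n t k (Fin.last (n + 1)) x y) ^ 2) := by
      rw [← hFeq y, hrow y]
    calc F y = Real.sqrt (∑ k, (D2 n t k (Fin.last (n + 1)) x y) ^ 2) := hF2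
      _ ≤ ∑ k, |D2 n t k (Fin.last (n + 1)) x y| :=
          sqrt_sum_sq_le_sum_abs_s8 _
      _ = (∑ m : Fin (n + 1), |D2 n t m.castSucc (Fin.last (n + 1)) x y|) +
          |D2 n t (Fin.last (n + 1)) (Fin.last (n + 1)) x y| :=
          Fin.sum_univ_castSucc _
      _ ≤ (∑ _m : Fin (n + 1), 4 * t⁻¹ *
            ((4 * π * t) ^ (-((n : ℝ) + 1) / 2) * (4 * π * t) ^ (-(1 : ℝ) / 2)) *
            Real.exp (-(x (Fin.last (n + 1))) ^ 2 / (8 * t)) *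
            (Real.exp (-(∑ j : Fin (n + 1), (x j.castSucc - y j.castSucc) ^ 2) / (8 * t)) *
              Real.exp (-(y (Fin.last (n + 1))) ^ 2 / (8 * t)))) +
          5 * t⁻¹ *
            ((4 * π * t) ^ (-((n : ℝ) + 1) / 2) * (4 * π * t) ^ (-(1 : ℝ) / 2)) *
            Real.exp (-(x (Fin.last (n + 1))) ^ 2 / (8 * t)) *
            (Real.exp (-(∑ j : Fin (n + 1), (x j.castSucc - y j.castSucc) ^ 2) / (8 * t)) *
              Real.exp (-(y (Fin.last (n + 1))) ^ 2 / (8 * t))) := by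
          refine add_le_add (Finset.sum_le_sum fun m _ => ?_) ?_
          · rw [D2_castSucc_last ht m x y]
            exact tangential_bound ht (fun j => x j.castSucc - y j.castSucc) m hxd.le hyd
          · rw [D2_last_last ht x y]
            exact normal_bound ht (fun j => x j.castSucc - y j.castSucc) hxd.le hyd
      _ = g y := by
          simp only [hg, hK0, hΦy, Finset.sum_const, Finset.card_univ, Fintype.card_fin,
            nsmul_eq_mul]
          push_cast
          ring
  -- integrability
  have hΦint : Integrable Φ := by
    rw [hΦ]
    exact Integrable.fintype_prod (f := fun j (u : ℝ) => Real.exp (-(u - w j) ^ 2 / (8 * t)))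
      fun j => integrable_gauss_shift ht (w j)
  have hgint : Integrable g := by
    rw [hg]; exact hΦint.const_mul K0
  have hFint : IntegrableOn F {y : Fin (n + 2) → ℝ | 0 < y (Fin.last (n + 1))} := by
    refine Integrable.mono' hgint.integrableOn hFc.aestronglyMeasurable.restrict ?_
    rw [ae_restrict_iff' hS]
    exact ae_of_all _ fun y hy => by
      rw [Real.norm_eq_abs, abs_of_nonneg (hFnonneg y)]
      exact hbd y hy
  -- main chain
  calc (∫ y in {y : Fin (n + 2) → ℝ | 0 < y (Fin.last (n + 1))},
        Real.sqrt (∑ k, ∑ i, (D2 n t k i x y) ^ 2))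
      = ∫ y in {y : Fin (n + 2) → ℝ | 0 < y (Fin.last (n + 1))}, F y := by rw [hfun]
    _ ≤ ∫ y in {y : Fin (n + 2) → ℝ | 0 < y (Fin.last (n + 1))}, g y :=
        setIntegral_mono_on hFint hgint.integrableOn hS hbd
    _ ≤ ∫ y, g y :=
        setIntegral_le_integral hgint (ae_of_all _ fun y =>
          mul_nonneg hK0pos.le (hΦnonneg y))
    _ = K0 * ∫ y, Φ y := by rw [hg]; exact integral_const_mul K0 Φ
    _ = K0 * Real.sqrt (8 * π * t) ^ (n + 2) := by
        rw [hΦ, volume_pi, integral_fintype_prod_eq_prod (ι := Fin (n + 2))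
          (fun j (u : ℝ) => Real.exp (-(u - w j) ^ 2 / (8 * t)))]
        rw [Finset.prod_congr rfl fun j _ => integral_gauss_shift ht (w j),
          Finset.prod_const, Finset.card_univ, Fintype.card_fin]
    _ ≤ (4 * ((n : ℝ) + 1) + 5) * 2 ^ (n + 2) * t⁻¹ *
          Real.exp (-(x (Fin.last (n + 1))) ^ 2 / (8 * t)) := by
        have h := rpow_calc n ht
        calc K0 * Real.sqrt (8 * π * t) ^ (n + 2)
            = ((4 * ((n : ℝ) + 1) + 5) * t⁻¹ *
                Real.exp (-(x (Fin.last (n + 1))) ^ 2 / (8 * t))) *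
              (((4 * π * t) ^ (-((n : ℝ) + 1) / 2) * (4 * π * t) ^ (-(1 : ℝ) / 2)) *
                Real.sqrt (8 * π * t) ^ (n + 2)) := by rw [hK0]; ring
          _ ≤ ((4 * ((n : ℝ) + 1) + 5) * t⁻¹ *
                Real.exp (-(x (Fin.last (n + 1))) ^ 2 / (8 * t))) * 2 ^ (n + 2) := by
              refine mul_le_mul_of_nonneg_left h ?_
              have h1 : (0 : ℝ) < 4 * ((n : ℝ) + 1) + 5 := by positivity
              exact (mul_nonneg (mul_nonneg h1.le (inv_nonneg.mpr ht.le))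
                (Real.exp_pos _).le)
          _ = (4 * ((n : ℝ) + 1) + 5) * 2 ^ (n + 2) * t⁻¹ *
                Real.exp (-(x (Fin.last (n + 1))) ^ 2 / (8 * t)) := by ring
end

section
/- There exists an absolute constant C > 0 such that for every bounded measurable θ : ℝ²₊ → ℝ with θ ∈ L¹(ℝ²₊), every x ∈ ℝ²₊, and every 0 < δ ≤ L: | ∫_{ {y ∈ ℝ²₊ : max(|x₁−y₁|, |x₂−y₂|) ≥ δ} } ( |x−y|^{−3} − |x−ỹ|^{−3} ) (x₁ − y₁) θ(y) dy | ≤ C log(L/δ) ‖θ‖_{L^∞(ℝ²₊)} + C L^{−2} ‖θ‖_{L¹(ℝ²₊)}, where ỹ = (y₁, −y₂). -/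
open MeasureTheory Real Set

open scoped ENNReal NNReal

private lemma kernel_abs_le {A B c : ℝ} (hA : 0 < A) (hAB : A ≤ B) (hc : c ^ 2 ≤ A) :
    |(A ^ (-(3:ℝ)/2) - B ^ (-(3:ℝ)/2)) * c| ≤ A⁻¹ := by
  have hB : 0 < B := lt_of_lt_of_le hA hAB
  have h1 : B ^ (-(3:ℝ)/2) ≤ A ^ (-(3:ℝ)/2) :=
    Real.rpow_le_rpow_of_nonpos hA hAB (by norm_num)
  have h0 : (0:ℝ) < B ^ (-(3:ℝ)/2) := Real.rpow_pos_of_pos hB _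
  have habs1 : |A ^ (-(3:ℝ)/2) - B ^ (-(3:ℝ)/2)| ≤ A ^ (-(3:ℝ)/2) := by
    rw [abs_of_nonneg (by linarith)]; linarith
  have hcabs : |c| ≤ A ^ ((1:ℝ)/2) := by
    rw [show A ^ ((1:ℝ)/2) = Real.sqrt A from (Real.sqrt_eq_rpow A).symm]
    calc |c| = Real.sqrt (c ^ 2) := (Real.sqrt_sq_eq_abs c).symm
      _ ≤ Real.sqrt A := Real.sqrt_le_sqrt hc
  calc |(A ^ (-(3:ℝ)/2) - B ^ (-(3:ℝ)/2)) * c|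
      = |A ^ (-(3:ℝ)/2) - B ^ (-(3:ℝ)/2)| * |c| := abs_mul _ _
    _ ≤ A ^ (-(3:ℝ)/2) * A ^ ((1:ℝ)/2) :=
        mul_le_mul habs1 hcabs (abs_nonneg c) (Real.rpow_pos_of_pos hA _).le
    _ = A⁻¹ := by
        rw [← Real.rpow_add hA, show -(3:ℝ)/2 + 1/2 = -1 by norm_num, Real.rpow_neg_one]

private lemma annulus_integral {δ R : ℝ} (hδ : 0 < δ) (hδR : δ ≤ R) :
    ∫ z : ℝ × ℝ, (if δ^2 ≤ z.1^2 + z.2^2 ∧ z.1^2 + z.2^2 ≤ R^2 then (z.1^2 + z.2^2)⁻¹ else 0)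
      = (2 * π) * Real.log (R / δ) := by
  have hR : 0 < R := lt_of_lt_of_le hδ hδR
  rw [← integral_comp_polarCoord_symm]
  have hcong : ∀ p ∈ polarCoord.target,
      (p.1 • if δ^2 ≤ (polarCoord.symm p).1^2 + (polarCoord.symm p).2^2 ∧
          (polarCoord.symm p).1^2 + (polarCoord.symm p).2^2 ≤ R^2 then
          ((polarCoord.symm p).1^2 + (polarCoord.symm p).2^2)⁻¹ else 0)
        = (Icc δ R).indicator (fun r => r⁻¹) p.1 * (1:ℝ) := by
    rintro ⟨r, φ⟩ ⟨hr, hφ⟩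
    have hr' : (0:ℝ) < r := hr
    have hsq : (polarCoord.symm (r, φ)).1^2 + (polarCoord.symm (r, φ)).2^2 = r^2 := by
      rw [polarCoord_symm_apply]
      simp only
      nlinarith [sin_sq_add_cos_sq φ]
    rw [hsq]
    have hiff : (δ^2 ≤ r^2 ∧ r^2 ≤ R^2) ↔ (δ ≤ r ∧ r ≤ R) := by
      constructor
      · rintro ⟨h1, h2⟩
        exact ⟨(pow_le_pow_iff_left₀ hδ.le hr'.le two_ne_zero).mp h1,
          (pow_le_pow_iff_left₀ hr'.le hR.le two_ne_zero).mp h2⟩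
      · rintro ⟨h1, h2⟩
        exact ⟨pow_le_pow_left₀ hδ.le h1 2, pow_le_pow_left₀ hr'.le h2 2⟩
    simp only [Set.indicator_apply, mem_Icc]
    by_cases h : δ ≤ r ∧ r ≤ R
    · rw [if_pos (hiff.mpr h), if_pos h]
      have : (r^2)⁻¹ = r⁻¹ * r⁻¹ := by rw [sq, mul_inv]
      simp only [smul_eq_mul, this]
      field_simp
    · rw [if_neg (fun hc => h (hiff.mp hc)), if_neg h]
      simp
  rw [setIntegral_congr_fun (polarCoord.open_target.measurableSet) hcong]
  have htarget : polarCoord.target = Ioi (0:ℝ) ×ˢ Ioo (-π) π := rfl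
  rw [htarget, Measure.volume_eq_prod, ← Measure.prod_restrict]
  rw [integral_prod_mul (μ := volume.restrict (Ioi (0:ℝ))) (ν := volume.restrict (Ioo (-π) π))
    (fun r => (Icc δ R).indicator (fun r => r⁻¹) r) (fun _ => (1:ℝ))]
  have h2 : ∫ (_ : ℝ) in Ioo (-π) π, (1:ℝ) = 2 * π := by
    rw [setIntegral_const, measureReal_def, Real.volume_Ioo, smul_eq_mul, mul_one,
      ENNReal.toReal_ofReal (by linarith [Real.pi_pos])]
    ring
  have h1 : ∫ r in Ioi (0:ℝ), (Icc δ R).indicator (fun r => r⁻¹) r = Real.log (R / δ) := by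
    have hss : Icc δ R ∩ Ioi 0 = Icc δ R :=
      inter_eq_self_of_subset_left (fun r hr => lt_of_lt_of_le hδ hr.1)
    rw [integral_indicator measurableSet_Icc, Measure.restrict_restrict measurableSet_Icc,
      hss, integral_Icc_eq_integral_Ioc, ← intervalIntegral.integral_of_le hδR]
    exact integral_inv (by rw [Set.uIcc_of_le hδR]; rintro ⟨h1', h2'⟩; linarith)
  rw [h1, h2]; ring

set_option maxHeartbeats 2000000 in
/-- There is an absolute constant `C > 0` such that for every bounded
measurable `θ ∈ L¹(ℝ²₊)`, every `x ∈ ℝ²₊` and every `0 < δ ≤ L`: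
`|∫_{max(|x₁−y₁|,|x₂−y₂|)≥δ, y₂>0} (|x−y|⁻³ − |x−ỹ|⁻³)(x₁−y₁) θ(y) dy|
  ≤ C log(L/δ) ‖θ‖_{L^∞(ℝ²₊)} + C L⁻² ‖θ‖_{L¹(ℝ²₊)}`, where `ỹ = (y₁,−y₂)`. -/
theorem stmt_16 :
    ∃ C : ℝ, 0 < C ∧
      ∀ θ : ℝ × ℝ → ℝ, Measurable θ → (∃ M : ℝ, ∀ y : ℝ × ℝ, |θ y| ≤ M) →
      MeasureTheory.IntegrableOn θ {y : ℝ × ℝ | 0 < y.2} →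
      ∀ x : ℝ × ℝ, 0 < x.2 → ∀ δ L : ℝ, 0 < δ → δ ≤ L →
      |∫ y in {y : ℝ × ℝ | 0 < y.2 ∧ δ ≤ max |x.1 - y.1| |x.2 - y.2|},
          (((x.1 - y.1) ^ 2 + (x.2 - y.2) ^ 2) ^ (-(3 : ℝ) / 2) -
            ((x.1 - y.1) ^ 2 + (x.2 + y.2) ^ 2) ^ (-(3 : ℝ) / 2)) *
            (x.1 - y.1) * θ y|
        ≤ C * Real.log (L / δ) *
            (eLpNorm θ ⊤ (volume.restrict {y : ℝ × ℝ | 0 < y.2})).toReal +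
          C * L ^ (-(2 : ℝ)) * ∫ y in {y : ℝ × ℝ | 0 < y.2}, |θ y| := by
  refine ⟨10, by norm_num, ?_⟩
  intro θ hθm hθbdd hθint x hx δ L hδ hδL
  obtain ⟨M, hM⟩ := hθbdd
  have hL : 0 < L := lt_of_lt_of_le hδ hδL
  set P : Set (ℝ × ℝ) := {y | 0 < y.2} with hPdef
  set S : Set (ℝ × ℝ) := {y : ℝ × ℝ | 0 < y.2 ∧ δ ≤ max |x.1 - y.1| |x.2 - y.2|} with hSdef
  set A : ℝ × ℝ → ℝ := fun y => (x.1 - y.1)^2 + (x.2 - y.2)^2 with hAdef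
  set f : ℝ × ℝ → ℝ := fun y =>
    (((x.1 - y.1) ^ 2 + (x.2 - y.2) ^ 2) ^ (-(3 : ℝ) / 2) -
      ((x.1 - y.1) ^ 2 + (x.2 + y.2) ^ 2) ^ (-(3 : ℝ) / 2)) * (x.1 - y.1) * θ y with hfdef
  set Minf : ℝ := (eLpNorm θ ⊤ (volume.restrict P)).toReal with hMdef
  set I1 : ℝ := ∫ y in P, |θ y| with hI1def
  -- basic facts
  have hPm : MeasurableSet P := measurableSet_lt measurable_const measurable_snd
  have hmax : Measurable fun y : ℝ × ℝ => max |x.1 - y.1| |x.2 - y.2| := by fun_prop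
  have hSm : MeasurableSet S := by
    have : S = P ∩ {y : ℝ × ℝ | δ ≤ max |x.1 - y.1| |x.2 - y.2|} := rfl
    rw [this]; exact hPm.inter (measurableSet_le measurable_const hmax)
  have hfm : Measurable f := by
    apply Measurable.mul _ hθm
    apply Measurable.mul _ (measurable_const.sub measurable_fst)
    apply Measurable.sub <;> fun_prop
  have hAm : Measurable A := by fun_prop
  have hSP : S ⊆ P := fun y hy => hy.1
  have hθS : IntegrableOn θ S volume := hθint.mono_set hSP
  have hI1nn : 0 ≤ I1 := integral_nonneg fun y => abs_nonneg _
  have hMinfnn : 0 ≤ Minf := ENNReal.toReal_nonneg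
  have hlognn : 0 ≤ Real.log (L / δ) :=
    Real.log_nonneg ((one_le_div hδ).mpr hδL)
  have hrp : L ^ (-(2:ℝ)) = (L ^ 2)⁻¹ := by
    rw [Real.rpow_neg hL.le]
    norm_num
  -- pointwise facts on S
  have hAS : ∀ y ∈ S, δ ^ 2 ≤ A y := by
    intro y hy
    rcases le_max_iff.mp hy.2 with h | h
    · have := pow_le_pow_left₀ hδ.le h 2
      rw [sq_abs] at this
      simp only [hAdef]
      nlinarith [sq_nonneg (x.2 - y.2)]
    · have := pow_le_pow_left₀ hδ.le h 2
      rw [sq_abs] at this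
      simp only [hAdef]
      nlinarith [sq_nonneg (x.1 - y.1)]
  have hApos : ∀ y ∈ S, 0 < A y := fun y hy => lt_of_lt_of_le (by positivity) (hAS y hy)
  have hfS : ∀ y ∈ S, |f y| ≤ (A y)⁻¹ * |θ y| := by
    intro y hy
    have hAB : A y ≤ (x.1 - y.1) ^ 2 + (x.2 + y.2) ^ 2 := by
      have h1 := hy.1
      simp only [hAdef]
      nlinarith [hx, hy.1]
    have hc : (x.1 - y.1) ^ 2 ≤ A y := by
      simp only [hAdef]; nlinarith [sq_nonneg (x.2 - y.2)]
    calc |f y| = |(((x.1 - y.1) ^ 2 + (x.2 - y.2) ^ 2) ^ (-(3 : ℝ) / 2) -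
          ((x.1 - y.1) ^ 2 + (x.2 + y.2) ^ 2) ^ (-(3 : ℝ) / 2)) * (x.1 - y.1)| * |θ y| := by
          rw [hfdef, abs_mul]
      _ ≤ (A y)⁻¹ * |θ y| :=
          mul_le_mul_of_nonneg_right (kernel_abs_le (hApos y hy) hAB hc) (abs_nonneg _)
  -- integrability of f on S
  have hfint : IntegrableOn f S volume := by
    refine Integrable.mono' ((hθS.abs).const_mul ((δ ^ 2)⁻¹)) hfm.aestronglyMeasurable ?_
    rw [ae_restrict_iff' hSm]
    refine Filter.Eventually.of_forall fun y hy => ?_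
    rw [Real.norm_eq_abs]
    calc |f y| ≤ (A y)⁻¹ * |θ y| := hfS y hy
      _ ≤ (δ ^ 2)⁻¹ * |θ y| :=
        mul_le_mul_of_nonneg_right (inv_anti₀ (by positivity) (hAS y hy)) (abs_nonneg _)
  have habs : |∫ y in S, f y| ≤ ∫ y in S, |f y| := by
    rw [← Real.norm_eq_abs]
    refine (norm_integral_le_integral_norm f).trans ?_
    simp [Real.norm_eq_abs]
  -- essential sup bound
  have hbound_ae : ∀ᵐ y ∂(volume.restrict P), |θ y| ≤ Minf := by
    have htop : eLpNorm θ ⊤ (volume.restrict P) ≠ ⊤ := by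
      rw [eLpNorm_exponent_top]
      exact ((eLpNormEssSup_le_of_ae_bound (C := M)
        (Filter.Eventually.of_forall fun y => by simpa [Real.norm_eq_abs] using hM y)).trans_lt
        ENNReal.ofReal_lt_top).ne
    filter_upwards [ae_le_eLpNormEssSup (f := θ) (μ := volume.restrict P)] with y hy
    have : ((‖θ y‖₊ : ℝ≥0∞)).toReal ≤ Minf := by
      rw [hMdef, eLpNorm_exponent_top]
      exact ENNReal.toReal_mono (by rw [← eLpNorm_exponent_top]; exact htop) hy
    simpa [Real.norm_eq_abs] using this
  -- I1 domination helper
  have hθP_abs : IntegrableOn (fun y => |θ y|) P volume := hθint.abs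
  rcases le_or_gt (2 * δ) L with hcase | hcase
  · -- main case : split near / far
    set near : Set (ℝ × ℝ) := S ∩ {y : ℝ × ℝ | max |x.1 - y.1| |x.2 - y.2| ≤ L} with hneardef
    set far : Set (ℝ × ℝ) := S ∩ {y : ℝ × ℝ | L < max |x.1 - y.1| |x.2 - y.2|} with hfardef
    have hnm : MeasurableSet near := hSm.inter (measurableSet_le hmax measurable_const)
    have hfarm : MeasurableSet far := hSm.inter (measurableSet_lt measurable_const hmax)
    have hSeq : S = near ∪ far := by
      ext y
      simp only [hneardef, hfardef, mem_union, mem_inter_iff, mem_setOf_eq]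
      constructor
      · intro h; rcases le_or_gt (max |x.1 - y.1| |x.2 - y.2|) L with h' | h'
        · exact Or.inl ⟨h, h'⟩
        · exact Or.inr ⟨h, h'⟩
      · rintro (⟨h, _⟩ | ⟨h, _⟩) <;> exact h
    have hdisj : Disjoint near far := by
      rw [Set.disjoint_left]
      rintro y ⟨_, h1⟩ ⟨_, h2⟩
      have h1' : |x.1 - y.1| ⊔ |x.2 - y.2| ≤ L := h1
      have h2' : L < |x.1 - y.1| ⊔ |x.2 - y.2| := h2
      linarith
    have hnearS : near ⊆ S := inter_subset_left
    have hfarS : far ⊆ S := inter_subset_left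
    have hfabsS : IntegrableOn (fun y => |f y|) S volume := hfint.abs
    have hsplit : ∫ y in S, |f y| = (∫ y in near, |f y|) + ∫ y in far, |f y| := by
      rw [hSeq]
      exact setIntegral_union hdisj hfarm (hfabsS.mono_set hnearS) (hfabsS.mono_set hfarS)
    -- far bound
    have hfar_bound : (∫ y in far, |f y|) ≤ (L ^ 2)⁻¹ * I1 := by
      have hptw : ∀ y ∈ far, |f y| ≤ (L ^ 2)⁻¹ * |θ y| := by
        intro y hy
        have hL2 : L ^ 2 ≤ A y := by
          rcases le_max_iff.mp (le_of_lt (show L < |x.1 - y.1| ⊔ |x.2 - y.2| from hy.2)) with h | h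
          · have := pow_le_pow_left₀ hL.le h 2
            rw [sq_abs] at this
            simp only [hAdef]; nlinarith [sq_nonneg (x.2 - y.2)]
          · have := pow_le_pow_left₀ hL.le h 2
            rw [sq_abs] at this
            simp only [hAdef]; nlinarith [sq_nonneg (x.1 - y.1)]
        calc |f y| ≤ (A y)⁻¹ * |θ y| := hfS y (hfarS hy)
          _ ≤ (L ^ 2)⁻¹ * |θ y| :=
            mul_le_mul_of_nonneg_right (inv_anti₀ (by positivity) hL2) (abs_nonneg _)
      calc (∫ y in far, |f y|)
          ≤ ∫ y in far, (L ^ 2)⁻¹ * |θ y| :=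
            setIntegral_mono_on (hfabsS.mono_set hfarS)
              (((hθint.mono_set (hfarS.trans hSP)).abs).const_mul _) hfarm hptw
        _ = (L ^ 2)⁻¹ * ∫ y in far, |θ y| := integral_const_mul _ _
        _ ≤ (L ^ 2)⁻¹ * I1 := by
            refine mul_le_mul_of_nonneg_left ?_ (by positivity)
            exact setIntegral_mono_set hθP_abs
              (Filter.Eventually.of_forall fun y => abs_nonneg _)
              (HasSubset.Subset.eventuallyLE (hfarS.trans hSP))
    -- near bound
    set R : ℝ := Real.sqrt 2 * L with hRdef
    have hsqrt2 : (1:ℝ) ≤ Real.sqrt 2 := by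
      rw [show (1:ℝ) = Real.sqrt 1 from (Real.sqrt_one).symm]
      exact Real.sqrt_le_sqrt (by norm_num)
    have hR : 0 < R := by positivity
    have hδR : δ ≤ R := hδL.trans (le_mul_of_one_le_left hL.le hsqrt2)
    have hR2 : R ^ 2 = 2 * L ^ 2 := by
      rw [hRdef, mul_pow, Real.sq_sqrt (by norm_num : (0:ℝ) ≤ 2)]
    have hnear_box : near ⊆ Icc (x.1 - L) (x.1 + L) ×ˢ Icc (x.2 - L) (x.2 + L) := by
      rintro y ⟨_, hy2⟩
      have h1 : |x.1 - y.1| ≤ L := le_trans (le_max_left _ _) hy2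
      have h2 : |x.2 - y.2| ≤ L := le_trans (le_max_right _ _) hy2
      rw [abs_le] at h1 h2
      exact ⟨⟨by linarith [h1.2], by linarith [h1.1]⟩, ⟨by linarith [h2.2], by linarith [h2.1]⟩⟩
    have hnear_fin : volume near < ⊤ := by
      refine lt_of_le_of_lt (measure_mono hnear_box) ?_
      rw [Measure.volume_eq_prod, Measure.prod_prod]
      exact ENNReal.mul_lt_top measure_Icc_lt_top measure_Icc_lt_top
    have hAinv_int : IntegrableOn (fun y => (A y)⁻¹) near volume := by
      refine Integrable.mono' (g := fun _ => (δ ^ 2)⁻¹)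
        ((integrableOn_const_iff).mpr (Or.inr hnear_fin)) (hAm.inv).aestronglyMeasurable ?_
      rw [ae_restrict_iff' hnm]
      refine Filter.Eventually.of_forall fun y hy => ?_
      rw [Real.norm_eq_abs, abs_of_nonneg (by positivity)]
      exact inv_anti₀ (by positivity) (hAS y hy.1)
    have hnear1 : (∫ y in near, |f y|) ≤ Minf * ∫ y in near, (A y)⁻¹ := by
      rw [← integral_const_mul]
      refine integral_mono_ae (hfabsS.mono_set hnearS) (hAinv_int.const_mul Minf) ?_
      have hbnd : ∀ᵐ y ∂(volume.restrict near), |θ y| ≤ Minf :=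
        ae_restrict_of_ae_restrict_of_subset (hnearS.trans hSP) hbound_ae
      have hmem : ∀ᵐ y ∂(volume.restrict near), y ∈ near :=
        (ae_restrict_iff' hnm).mpr (Filter.Eventually.of_forall fun y hy => hy)
      filter_upwards [hbnd, hmem] with y h1 h2
      calc |f y| ≤ (A y)⁻¹ * |θ y| := hfS y (hnearS h2)
        _ ≤ (A y)⁻¹ * Minf := mul_le_mul_of_nonneg_left h1 (by positivity)
        _ = Minf * (A y)⁻¹ := mul_comm _ _
    set G : ℝ × ℝ → ℝ := fun z =>
      if δ ^ 2 ≤ z.1 ^ 2 + z.2 ^ 2 ∧ z.1 ^ 2 + z.2 ^ 2 ≤ R ^ 2 then (z.1 ^ 2 + z.2 ^ 2)⁻¹ else 0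
      with hGdef
    have hq : Measurable fun z : ℝ × ℝ => z.1 ^ 2 + z.2 ^ 2 := by fun_prop
    have hGm : Measurable G := by
      refine Measurable.ite ?_ hq.inv measurable_const
      exact (measurableSet_le measurable_const hq).inter (measurableSet_le hq measurable_const)
    have hGnn : ∀ z, 0 ≤ G z := by
      intro z
      rw [hGdef]
      dsimp only
      split
      · positivity
      · exact le_refl 0
    have hGint : Integrable G := by
      have hboxm : MeasurableSet (Icc (-R) R ×ˢ Icc (-R) R : Set (ℝ × ℝ)) :=
        measurableSet_Icc.prod measurableSet_Icc
      have hboxfin : volume (Icc (-R) R ×ˢ Icc (-R) R : Set (ℝ × ℝ)) < ⊤ := by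
        rw [Measure.volume_eq_prod, Measure.prod_prod]
        exact ENNReal.mul_lt_top measure_Icc_lt_top measure_Icc_lt_top
      refine Integrable.mono'
        (g := (Icc (-R) R ×ˢ Icc (-R) R : Set (ℝ × ℝ)).indicator fun _ => (δ ^ 2)⁻¹)
        ((integrable_indicator_iff hboxm).mpr ((integrableOn_const_iff).mpr (Or.inr hboxfin)))
        hGm.aestronglyMeasurable ?_
      refine Filter.Eventually.of_forall fun z => ?_
      rw [Real.norm_eq_abs, abs_of_nonneg (hGnn z)]
      by_cases hcond : δ ^ 2 ≤ z.1 ^ 2 + z.2 ^ 2 ∧ z.1 ^ 2 + z.2 ^ 2 ≤ R ^ 2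
      · have hz1 : |z.1| ≤ R := by nlinarith [sq_abs z.1, abs_nonneg z.1, sq_nonneg z.2]
        have hz2 : |z.2| ≤ R := by nlinarith [sq_abs z.2, abs_nonneg z.2, sq_nonneg z.1]
        rw [abs_le] at hz1 hz2
        have hmem : z ∈ (Icc (-R) R ×ˢ Icc (-R) R : Set (ℝ × ℝ)) :=
          ⟨⟨hz1.1, hz1.2⟩, ⟨hz2.1, hz2.2⟩⟩
        rw [hGdef]
        dsimp only
        rw [if_pos hcond, Set.indicator_of_mem hmem]
        exact inv_anti₀ (by positivity) hcond.1
      · rw [hGdef]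
        dsimp only
        rw [if_neg hcond]
        exact Set.indicator_nonneg (fun _ _ => by positivity) z
    have hptwG : ∀ y, near.indicator (fun y => (A y)⁻¹) y ≤ G (x - y) := by
      intro y
      by_cases hy : y ∈ near
      · rw [Set.indicator_of_mem hy]
        have hsub1 : (x - y).1 = x.1 - y.1 := rfl
        have hsub2 : (x - y).2 = x.2 - y.2 := rfl
        have hcond : δ ^ 2 ≤ (x - y).1 ^ 2 + (x - y).2 ^ 2 ∧
            (x - y).1 ^ 2 + (x - y).2 ^ 2 ≤ R ^ 2 := by
          rw [hsub1, hsub2]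
          constructor
          · exact hAS y (hnearS hy)
          · have h1 : |x.1 - y.1| ≤ L := le_trans (le_max_left _ _) hy.2
            have h2 : |x.2 - y.2| ≤ L := le_trans (le_max_right _ _) hy.2
            have e1 := pow_le_pow_left₀ (abs_nonneg _) h1 2
            have e2 := pow_le_pow_left₀ (abs_nonneg _) h2 2
            rw [sq_abs] at e1 e2
            rw [hR2]; linarith
        rw [hGdef]
        dsimp only
        rw [if_pos hcond, hsub1, hsub2]
      · rw [Set.indicator_of_notMem hy]
        exact hGnn _
    have hnear2 : (∫ y in near, (A y)⁻¹) ≤ (2 * π) * Real.log (R / δ) := by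
      calc (∫ y in near, (A y)⁻¹)
          = ∫ y, near.indicator (fun y => (A y)⁻¹) y := (integral_indicator hnm).symm
        _ ≤ ∫ y, G (x - y) := by
            refine integral_mono ((integrable_indicator_iff hnm).mpr hAinv_int)
              (hGint.comp_sub_left x) hptwG
        _ = ∫ z, G z := integral_sub_left_eq_self G volume x
        _ = (2 * π) * Real.log (R / δ) := annulus_integral hδ hδR
    have hlogR : Real.log (R / δ) ≤ (3 / 2) * Real.log (L / δ) := by
      have hld : (0:ℝ) < L / δ := div_pos hL hδ
      have hRd : R / δ = Real.sqrt 2 * (L / δ) := by rw [hRdef]; ring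
      rw [hRd, Real.log_mul (by positivity) (ne_of_gt hld), Real.log_sqrt (by norm_num)]
      have h2d : (2:ℝ) ≤ L / δ := by rw [le_div_iff₀ hδ]; linarith
      have := Real.log_le_log (by norm_num : (0:ℝ) < 2) h2d
      linarith
    -- assemble
    have hfinal : (∫ y in S, |f y|) ≤ Minf * ((2 * π) * Real.log (R / δ)) + (L ^ 2)⁻¹ * I1 := by
      rw [hsplit]
      have := mul_le_mul_of_nonneg_left hnear2 hMinfnn
      linarith [hnear1.trans this]
    have hpi : π < 3.15 := by linarith [Real.pi_lt_d6]
    have hmain : Minf * ((2 * π) * Real.log (R / δ)) ≤ 10 * Real.log (L / δ) * Minf := by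
      have h1 : Minf * ((2 * π) * Real.log (R / δ)) ≤ Minf * ((2 * π) * ((3/2) * Real.log (L / δ))) := by
        refine mul_le_mul_of_nonneg_left ?_ hMinfnn
        refine mul_le_mul_of_nonneg_left hlogR (by positivity)
      have h2 : Minf * ((2 * π) * ((3/2) * Real.log (L / δ))) ≤ 10 * Real.log (L / δ) * Minf := by
        have hkey : (0:ℝ) ≤ (10 - 3 * π) * (Real.log (L / δ) * Minf) :=
          mul_nonneg (by nlinarith) (mul_nonneg hlognn hMinfnn)
        nlinarith
      linarith
    calc |∫ y in S, f y| ≤ ∫ y in S, |f y| := habs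
      _ ≤ Minf * ((2 * π) * Real.log (R / δ)) + (L ^ 2)⁻¹ * I1 := hfinal
      _ ≤ 10 * Real.log (L / δ) * Minf + 10 * L ^ (-(2:ℝ)) * I1 := by
          rw [hrp]
          have : (L ^ 2)⁻¹ * I1 ≤ 10 * (L ^ 2)⁻¹ * I1 := by nlinarith [hI1nn, sq_nonneg L, inv_nonneg.mpr (sq_nonneg L)]
          linarith [hmain]
  · -- easy case : L < 2δ
    have hkey : ∀ y ∈ S, |f y| ≤ (δ ^ 2)⁻¹ * |θ y| := by
      intro y hy
      calc |f y| ≤ (A y)⁻¹ * |θ y| := hfS y hy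
        _ ≤ (δ ^ 2)⁻¹ * |θ y| :=
          mul_le_mul_of_nonneg_right (inv_anti₀ (by positivity) (hAS y hy)) (abs_nonneg _)
    have h1 : (∫ y in S, |f y|) ≤ (δ ^ 2)⁻¹ * I1 := by
      calc (∫ y in S, |f y|)
          ≤ ∫ y in S, (δ ^ 2)⁻¹ * |θ y| :=
            setIntegral_mono_on hfint.abs ((hθS.abs).const_mul _) hSm hkey
        _ = (δ ^ 2)⁻¹ * ∫ y in S, |θ y| := integral_const_mul _ _
        _ ≤ (δ ^ 2)⁻¹ * I1 := by
            refine mul_le_mul_of_nonneg_left ?_ (by positivity)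
            exact setIntegral_mono_set hθP_abs
              (Filter.Eventually.of_forall fun y => abs_nonneg _)
              (HasSubset.Subset.eventuallyLE hSP)
    have h2 : (δ ^ 2)⁻¹ ≤ 4 * (L ^ 2)⁻¹ := by
      rw [show 4 * (L ^ 2)⁻¹ = (L ^ 2 / 4)⁻¹ by field_simp]
      exact inv_anti₀ (by positivity) (by nlinarith)
    calc |∫ y in S, f y| ≤ ∫ y in S, |f y| := habs
      _ ≤ (δ ^ 2)⁻¹ * I1 := h1
      _ ≤ 10 * Real.log (L / δ) * Minf + 10 * L ^ (-(2:ℝ)) * I1 := by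
          rw [hrp]
          have h3 : (δ ^ 2)⁻¹ * I1 ≤ 4 * (L ^ 2)⁻¹ * I1 :=
            mul_le_mul_of_nonneg_right h2 hI1nn
          have h4 : (0:ℝ) ≤ 10 * Real.log (L / δ) * Minf :=
            mul_nonneg (mul_nonneg (by norm_num) hlognn) hMinfnn
          have h5 : 4 * (L ^ 2)⁻¹ * I1 ≤ 10 * (L ^ 2)⁻¹ * I1 := by
            have : (0:ℝ) ≤ (L ^ 2)⁻¹ * I1 := mul_nonneg (by positivity) hI1nn
            nlinarith
          linarith
end
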